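/- arXiv:1707.02246 — 2 statements merged into one kernel-verified Lean document; each statement's English description precedes it below -/
import Mathlib

section
/- Let X_1,…,X_S be i.i.d. real-valued random variables with common law P, let p ∈ (0,1), and let X^{(1)} ≤ … ≤ X^{(S)} denote the order statistics. Suppose s ∈ {1,…,S} and δ ∈ (0,1) satisfy Σ_{j=s}^{S} C(S,j) (1−p)^{j} p^{S−j} ≤ δ. Then, with probability at least 1 − δ over the sample, the s-th order statistic is an upper bound for the (1−p)-quantile in the sense that P({ x : x ≤ X^{(s)} }) ≥ 1 − p. -/
open MeasureTheory

/-- The `k`-th order statistic (1-indexed, `k ∈ {1,…,S}`) of the tuple `X`: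
the `k`-th smallest value among `X 0, …, X (S-1)`, counted with multiplicity. -/
noncomputable def orderStat {S : ℕ} (X : Fin S → ℝ) (k : ℕ) : ℝ :=
  if h : k - 1 < S then X (Tuple.sort X ⟨k - 1, h⟩) else 0

section Auxiliary

open Finset ENNReal

noncomputable def btail (n k : ℕ) (x : ℝ) : ℝ :=
  ∑ j ∈ Finset.Icc k n, (n.choose j : ℝ) * x ^ j * (1 - x) ^ (n - j)

lemma btail_zero (n : ℕ) (x : ℝ) : btail n 0 x = 1 := by
  have h := add_pow x (1 - x) n
  simp only [add_sub_cancel, one_pow] at h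
  unfold btail
  rw [show Finset.Icc 0 n = Finset.range (n+1) by
    ext j; simp [Nat.lt_succ_iff]]
  rw [show ∑ j ∈ Finset.range (n+1), (n.choose j:ℝ) * x^j * (1-x)^(n-j)
      = ∑ m ∈ Finset.range (n+1), x^m * (1-x)^(n-m) * (n.choose m:ℝ) from
    Finset.sum_congr rfl (fun j _ => by ring)]
  exact h.symm

lemma btail_nonneg (n k : ℕ) {x : ℝ} (h0 : 0 ≤ x) (h1 : x ≤ 1) : 0 ≤ btail n k x := by
  have h1' : (0:ℝ) ≤ 1 - x := by linarith
  apply Finset.sum_nonneg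
  intro j hj
  positivity

lemma btail_anti (n : ℕ) {k l : ℕ} (hkl : k ≤ l) {x : ℝ} (h0 : 0 ≤ x) (h1 : x ≤ 1) :
    btail n l x ≤ btail n k x := by
  have h1' : (0:ℝ) ≤ 1 - x := by linarith
  apply Finset.sum_le_sum_of_subset_of_nonneg
  · exact Finset.Icc_subset_Icc_left hkl
  · intro j _ _; positivity

lemma btail_succ (n k : ℕ) (x : ℝ) :
    btail (n+1) (k+1) x = x * btail n k x + (1-x) * btail n (k+1) x := by
  unfold btail
  set f : ℕ → ℝ := fun j => (n.choose j : ℝ) * x ^ j * (1-x) ^ (n-j) with hf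
  have hterm : ∀ j ∈ Finset.Icc (k+1) (n+1),
      ((n+1).choose j : ℝ) * x ^ j * (1-x) ^ (n+1-j) = x * f (j-1) + (1-x) * f j := by
    intro j hj
    simp only [Finset.mem_Icc] at hj
    obtain ⟨hj1, hj2⟩ := hj
    obtain ⟨i, rfl⟩ : ∃ i, j = i + 1 := ⟨j - 1, by omega⟩
    rw [Nat.choose_succ_succ]
    simp only [hf, Nat.add_sub_cancel]
    rcases eq_or_lt_of_le (by omega : i ≤ n) with h | h
    · subst h
      simp [Nat.choose_succ_self]
      ring
    · have e1 : n + 1 - (i+1) = n - i := by omega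
      have e2 : n - (i+1) + 1 = n - i := by omega
      rw [e1, ← e2, pow_succ]
      push_cast
      ring
  rw [Finset.sum_congr rfl hterm, Finset.sum_add_distrib]
  congr 1
  · rw [← Finset.mul_sum]
    congr 1
    rw [show Finset.Icc (k+1) (n+1) = Finset.image (· + 1) (Finset.Icc k n) by
      rw [Finset.image_add_right_Icc]]
    rw [Finset.sum_image (by intro a _ b _ h; simp only at h; omega)]
    simp
  · rw [← Finset.mul_sum]
    congr 1
    refine (Finset.sum_subset (Finset.Icc_subset_Icc_right (by omega)) ?_).symm
    intro j hj hj'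
    simp only [Finset.mem_Icc] at hj hj'
    have : j = n + 1 := by omega
    subst this
    simp [hf, Nat.choose_succ_self]

lemma btail_mono (n : ℕ) : ∀ (k : ℕ) {a b : ℝ}, 0 ≤ a → a ≤ b → b ≤ 1 →
    btail n k a ≤ btail n k b := by
  induction n with
  | zero =>
    intro k a b h0 hab hb1
    rcases Nat.eq_zero_or_pos k with rfl | hk
    · rw [btail_zero, btail_zero]
    · unfold btail
      rw [Finset.Icc_eq_empty (by omega)]
      simp
  | succ n ih =>
    intro k a b h0 hab hb1
    rcases Nat.eq_zero_or_pos k with rfl | hk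
    · rw [btail_zero, btail_zero]
    · obtain ⟨j, rfl⟩ : ∃ j, k = j + 1 := ⟨k - 1, by omega⟩
      have ha1 : a ≤ 1 := le_trans hab hb1
      have hb0 : 0 ≤ b := le_trans h0 hab
      rw [btail_succ, btail_succ]
      have hanti := btail_anti n (Nat.le_succ j) h0 ha1
      have h1 : a * btail n j a + (1-a) * btail n (j+1) a
          ≤ b * btail n j a + (1-b) * btail n (j+1) a := by nlinarith
      refine le_trans h1 ?_
      have i1 := ih j h0 hab hb1
      have i2 := ih (j+1) h0 hab hb1
      nlinarith [btail_nonneg n j h0 ha1, btail_nonneg n (j+1) h0 ha1]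

open MeasureTheory in
lemma exists_threshold (P : Measure ℝ) [IsProbabilityMeasure P] {p : ℝ}
    (hp : p ∈ Set.Ioo (0:ℝ) 1) :
    ∃ t : ℝ, ENNReal.ofReal (1-p) ≤ P (Set.Iic t) ∧ P (Set.Iio t) ≤ ENNReal.ofReal (1-p) := by
  set F := ProbabilityTheory.cdf P with hF
  set A : Set ℝ := {x | 1 - p ≤ F x} with hA
  have hne : A.Nonempty := by
    have h := (ProbabilityTheory.tendsto_cdf_atTop P).eventually_const_le
      (by simpa using hp.1 : 1 - p < 1)
    exact h.exists
  have hx0 : ∃ x₀, F x₀ < 1 - p := by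
    have h := (ProbabilityTheory.tendsto_cdf_atBot P).eventually_lt_const
      (by linarith [hp.2] : (0:ℝ) < 1 - p)
    exact h.exists
  obtain ⟨x₀, hx₀⟩ := hx0
  have hbdd : BddBelow A := by
    refine ⟨x₀, fun y hy => ?_⟩
    by_contra hxy
    push_neg at hxy
    exact absurd (le_trans hy (F.mono hxy.le)) (not_le.mpr hx₀)
  set t := sInf A with ht
  refine ⟨t, ?_, ?_⟩
  · -- 1 - p ≤ F t via right continuity
    have hIoi : ∀ x, t < x → 1 - p ≤ F x := by
      intro x hx
      obtain ⟨y, hyA, hyx⟩ := (csInf_lt_iff hbdd hne).mp hx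
      exact le_trans hyA (F.mono hyx.le)
    have htend : Filter.Tendsto F (nhdsWithin t (Set.Ioi t)) (nhds (F t)) :=
      ((F.right_continuous t).mono Set.Ioi_subset_Ici_self).tendsto
    have hft : 1 - p ≤ F t :=
      ge_of_tendsto htend (eventually_mem_nhdsWithin.mono (fun x hx => hIoi x hx))
    calc ENNReal.ofReal (1-p) ≤ ENNReal.ofReal (F t) := ENNReal.ofReal_le_ofReal hft
    _ = P (Set.Iic t) := ProbabilityTheory.ofReal_cdf P t
  · -- P (Iio t) ≤ ofReal (1-p)
    have hlt : ∀ x, x < t → F x < 1 - p := by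
      intro x hx
      by_contra hge
      push_neg at hge
      exact absurd (csInf_le hbdd hge) (not_le.mpr hx)
    set u : ℕ → Set ℝ := fun n => Set.Iic (t - 1/(n+1)) with hu
    have hmono : Monotone u := by
      intro m n hmn
      apply Set.Iic_subset_Iic.mpr
      have : (1:ℝ)/(n+1) ≤ 1/(m+1) := by
        apply div_le_div_of_nonneg_left one_pos.le (by positivity)
        exact_mod_cast by omega
      linarith
    have hunion : ⋃ n, u n = Set.Iio t := by
      ext x
      simp only [Set.mem_iUnion, hu, Set.mem_Iic, Set.mem_Iio]
      constructor
      · rintro ⟨n, hn⟩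
        have : (0:ℝ) < 1/(n+1) := by positivity
        linarith
      · intro hx
        obtain ⟨n, hn⟩ := exists_nat_one_div_lt (by linarith : (0:ℝ) < t - x)
        exact ⟨n, by linarith⟩
    have htend := tendsto_measure_iUnion_atTop (μ := P) hmono
    rw [hunion] at htend
    refine le_of_tendsto htend (Filter.Eventually.of_forall (fun n => ?_))
    show P (u n) ≤ _
    rw [hu]
    rw [← ProbabilityTheory.ofReal_cdf P]
    apply ENNReal.ofReal_le_ofReal
    have : t - 1/(n+1) < t := by
      have : (0:ℝ) < 1/(n+1) := by positivity
      linarith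
    exact (hlt _ this).le

open MeasureTheory in
lemma count_measure (P : Measure ℝ) [IsProbabilityMeasure P] {S : ℕ} (t : ℝ) (s : ℕ) :
    (Measure.pi fun _ : Fin S => P)
      {X : Fin S → ℝ | s ≤ (Finset.univ.filter (fun i => X i < t)).card}
    = ∑ j ∈ Finset.Icc s S,
        (S.choose j : ℝ≥0∞) * (P (Set.Iio t))^j * (P (Set.Ici t))^(S-j) := by
  classical
  set q := P (Set.Iio t)
  set r := P (Set.Ici t)
  set Box : Finset (Fin S) → Set (Fin S → ℝ) :=
    fun T => Set.pi Set.univ (fun i => if i ∈ T then Set.Iio t else Set.Ici t) with hBox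
  have hmem : ∀ (T : Finset (Fin S)) (X : Fin S → ℝ),
      X ∈ Box T ↔ Finset.univ.filter (fun i => X i < t) = T := by
    intro T X
    simp only [hBox, Set.mem_pi, Set.mem_univ, forall_true_left]
    constructor
    · intro h
      ext i
      simp only [Finset.mem_filter, Finset.mem_univ, true_and]
      constructor
      · intro hi
        by_contra hi'
        have := h i
        rw [if_neg hi'] at this
        exact absurd this (not_le.mpr hi)
      · intro hi
        have := h i
        rw [if_pos hi] at this
        exact this
    · intro h i
      by_cases hi : i ∈ T
      · rw [if_pos hi]
        have : i ∈ Finset.univ.filter (fun i => X i < t) := h ▸ hi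
        simpa using this
      · rw [if_neg hi]
        have : i ∉ Finset.univ.filter (fun i => X i < t) := h ▸ hi
        simp only [Finset.mem_filter, Finset.mem_univ, true_and, not_lt] at this
        exact this
  set ℬ : Finset (Finset (Fin S)) := Finset.univ.filter (fun T => s ≤ T.card) with hℬ
  have hevent : {X : Fin S → ℝ | s ≤ (Finset.univ.filter (fun i => X i < t)).card}
      = ⋃ T ∈ ℬ, Box T := by
    ext X
    simp only [Set.mem_setOf_eq, Set.mem_iUnion, hℬ, Finset.mem_filter, Finset.mem_univ,
      true_and, exists_prop]
    constructor
    · intro h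
      exact ⟨Finset.univ.filter (fun i => X i < t), h, (hmem _ _).mpr rfl⟩
    · rintro ⟨T, hT, hXT⟩
      rw [(hmem _ _).mp hXT]
      exact hT
  have hBoxMeas : ∀ T, MeasurableSet (Box T) := by
    intro T
    apply MeasurableSet.univ_pi
    intro i
    by_cases hi : i ∈ T
    · rw [if_pos hi]; exact measurableSet_Iio
    · rw [if_neg hi]; exact measurableSet_Ici
  have hdisj : (↑ℬ : Set (Finset (Fin S))).PairwiseDisjoint Box := by
    intro T hT T' hT' hne
    apply Set.disjoint_left.mpr
    intro X hX hX'
    exact hne (((hmem T X).mp hX).symm.trans ((hmem T' X).mp hX'))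
  have hBoxVol : ∀ T : Finset (Fin S), (Measure.pi fun _ : Fin S => P) (Box T)
      = q ^ T.card * r ^ (S - T.card) := by
    intro T
    rw [hBox, Measure.pi_pi]
    simp only [apply_ite P]
    rw [Finset.prod_ite]
    rw [Finset.prod_const, Finset.prod_const]
    congr 2
    · rw [Finset.filter_mem_eq_inter, Finset.univ_inter]
    · rw [Finset.filter_not, Finset.filter_mem_eq_inter, Finset.univ_inter,
        Finset.card_sdiff_of_subset (Finset.subset_univ T), Finset.card_univ, Fintype.card_fin]
  rw [hevent, measure_biUnion_finset hdisj (fun T _ => hBoxMeas T)]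
  rw [Finset.sum_congr rfl (fun T _ => hBoxVol T)]
  have hsplit : ℬ = (Finset.Icc s S).biUnion (fun j => Finset.powersetCard j Finset.univ) := by
    ext T
    simp only [hℬ, Finset.mem_filter, Finset.mem_univ, true_and, Finset.mem_biUnion,
      Finset.mem_Icc, Finset.mem_powersetCard_univ]
    constructor
    · intro h
      exact ⟨T.card, ⟨h, by simpa using Finset.card_le_univ T⟩, rfl⟩
    · rintro ⟨j, ⟨hj1, _⟩, rfl⟩
      exact hj1
  rw [hsplit, Finset.sum_biUnion]
  · apply Finset.sum_congr rfl
    intro j hj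
    rw [Finset.sum_congr rfl (fun T hT => by
      rw [Finset.mem_powersetCard_univ.mp hT])]
    rw [Finset.sum_const, Finset.card_powersetCard, Finset.card_univ, Fintype.card_fin,
      nsmul_eq_mul, mul_assoc]
  · intro i hi j hj hij
    simp only [Finset.coe_Icc, Set.mem_Icc] at hi hj
    apply Finset.disjoint_left.mpr
    intro T hTi hTj
    rw [Finset.mem_powersetCard_univ] at hTi hTj
    exact hij (hTi ▸ hTj ▸ rfl)

lemma count_le_of_orderStat_lt {S : ℕ} (X : Fin S → ℝ) (t : ℝ) {s : ℕ}
    (hs1 : 1 ≤ s) (hsS : s ≤ S) (h : orderStat X s < t) :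
    s ≤ (Finset.univ.filter (fun i => X i < t)).card := by
  classical
  have hsl : s - 1 < S := by omega
  rw [orderStat, dif_pos hsl] at h
  set σ := Tuple.sort X with hσ
  have hmono := Tuple.monotone_sort X
  set I : Finset (Fin S) :=
    Finset.image (fun j : Fin s => σ (Fin.castLE hsS j)) Finset.univ with hI
  have hinj : Function.Injective (fun j : Fin s => σ (Fin.castLE hsS j)) := by
    intro a b hab
    simp only at hab
    have := σ.injective hab
    exact Fin.castLE_injective hsS this
  have hcard : I.card = s := by
    rw [hI, Finset.card_image_of_injective _ hinj, Finset.card_univ, Fintype.card_fin]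
  have hsub : I ⊆ Finset.univ.filter (fun i => X i < t) := by
    intro i hi
    rw [hI, Finset.mem_image] at hi
    obtain ⟨j, _, rfl⟩ := hi
    simp only [Finset.mem_filter, Finset.mem_univ, true_and]
    have hle : (Fin.castLE hsS j) ≤ (⟨s - 1, hsl⟩ : Fin S) := by
      rw [Fin.le_def]
      simp only [Fin.coe_castLE]
      omega
    calc X (σ (Fin.castLE hsS j)) ≤ X (σ ⟨s - 1, hsl⟩) := hmono hle
    _ < t := h
  calc s = I.card := hcard.symm
  _ ≤ _ := Finset.card_le_card hsub

end Auxiliary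

open Finset ENNReal in
/-- **One-sided order-statistic quantile guarantee.**
Let `X_1,…,X_S` be i.i.d. with law `P`, `p ∈ (0,1)`, and suppose `s ∈ {1,…,S}`
and `δ ∈ (0,1)` satisfy `∑_{j=s}^{S} C(S,j) (1-p)^j p^{S-j} ≤ δ`.  Then with
probability at least `1 - δ` over the sample (w.r.t. the product measure `P^⊗S`),
the `s`-th order statistic upper-bounds the `(1-p)`-quantile:
`P({x : x ≤ X^{(s)}}) ≥ 1 - p`. -/
theorem orderStat_quantile_upper_bound
    (S : ℕ) (hS : 0 < S) (P : Measure ℝ) [IsProbabilityMeasure P]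
    (p δ : ℝ) (hp : p ∈ Set.Ioo (0 : ℝ) 1) (hδ : δ ∈ Set.Ioo (0 : ℝ) 1)
    (s : ℕ) (hs1 : 1 ≤ s) (hsS : s ≤ S)
    (hbinom : ∑ j ∈ Finset.Icc s S,
        (S.choose j : ℝ) * (1 - p) ^ j * p ^ (S - j) ≤ δ) :
    ENNReal.ofReal (1 - δ) ≤
      (Measure.pi fun _ : Fin S => P)
        {X : Fin S → ℝ | ENNReal.ofReal (1 - p) ≤ P {x : ℝ | x ≤ orderStat X s}} := by
  classical
  obtain ⟨t, ht1, ht2⟩ := exists_threshold P hp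
  set μ := Measure.pi fun _ : Fin S => P with hμ
  set B : Set (Fin S → ℝ) := {X | s ≤ (Finset.univ.filter (fun i => X i < t)).card} with hBdef
  set a : ℝ := (P (Set.Iio t)).toReal with ha
  have hq_ne : P (Set.Iio t) ≠ ⊤ := measure_ne_top P _
  have ha0 : (0:ℝ) ≤ a := ENNReal.toReal_nonneg
  have hap : a ≤ 1 - p := by
    rw [ha]
    exact ENNReal.toReal_le_of_le_ofReal (by linarith [hp.2]) ht2
  have ha1 : a ≤ 1 := by linarith [hp.1]
  have hq : P (Set.Iio t) = ENNReal.ofReal a := (ENNReal.ofReal_toReal hq_ne).symm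
  have hr : P (Set.Ici t) = ENNReal.ofReal (1 - a) := by
    rw [show Set.Ici t = (Set.Iio t)ᶜ from (Set.compl_Iio (a:=t)).symm,
      measure_compl measurableSet_Iio (measure_ne_top _ _), measure_univ, hq,
      ENNReal.ofReal_sub _ ha0, ENNReal.ofReal_one]
  have hB : μ B ≤ ENNReal.ofReal δ := by
    rw [hBdef, hμ, count_measure P t s]
    have hterm : ∀ j ∈ Finset.Icc s S,
        (S.choose j : ℝ≥0∞) * (P (Set.Iio t))^j * (P (Set.Ici t))^(S-j)
        = ENNReal.ofReal ((S.choose j : ℝ) * a^j * (1-a)^(S-j)) := by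
      intro j _
      rw [hq, hr, ← ENNReal.ofReal_pow ha0, ← ENNReal.ofReal_pow (by linarith),
        ← ENNReal.ofReal_natCast (S.choose j),
        ← ENNReal.ofReal_mul (by positivity), ← ENNReal.ofReal_mul (by positivity)]
    rw [Finset.sum_congr rfl hterm,
      ← ENNReal.ofReal_sum_of_nonneg (fun j _ =>
        mul_nonneg (mul_nonneg (Nat.cast_nonneg _) (pow_nonneg ha0 _))
          (pow_nonneg (by linarith : (0:ℝ) ≤ 1 - a) _))]
    apply ENNReal.ofReal_le_ofReal
    have e1 : ∑ j ∈ Finset.Icc s S, (S.choose j : ℝ) * a^j * (1-a)^(S-j) = btail S s a := rfl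
    have e2 : btail S s (1-p) = ∑ j ∈ Finset.Icc s S, (S.choose j:ℝ)*(1-p)^j*p^(S-j) := by
      unfold btail
      apply Finset.sum_congr rfl
      intro j _
      rw [_root_.sub_sub_cancel]
    calc ∑ j ∈ Finset.Icc s S, (S.choose j : ℝ) * a^j * (1-a)^(S-j)
        = btail S s a := e1
      _ ≤ btail S s (1-p) := btail_mono S s ha0 hap (by linarith [hp.1])
      _ ≤ δ := e2 ▸ hbinom
  have hgood : Bᶜ ⊆ {X : Fin S → ℝ | ENNReal.ofReal (1-p) ≤ P {x | x ≤ orderStat X s}} := by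
    intro X hX
    simp only [hBdef, Set.mem_compl_iff, Set.mem_setOf_eq, not_le] at hX
    simp only [Set.mem_setOf_eq]
    have hts : t ≤ orderStat X s := by
      by_contra hlt
      push_neg at hlt
      exact absurd (count_le_of_orderStat_lt X t hs1 hsS hlt) (not_le.mpr hX)
    calc ENNReal.ofReal (1-p) ≤ P (Set.Iic t) := ht1
      _ ≤ P (Set.Iic (orderStat X s)) := measure_mono (Set.Iic_subset_Iic.mpr hts)
      _ = P {x | x ≤ orderStat X s} := rfl
  have h1 : (1:ℝ≥0∞) ≤ μ B + μ Bᶜ := by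
    rw [← measure_univ (μ := μ), ← Set.union_compl_self B]
    exact measure_union_le _ _
  have h2 : ENNReal.ofReal (1-δ) ≤ μ Bᶜ := by
    have hsum : ENNReal.ofReal (1-δ) + ENNReal.ofReal δ = 1 := by
      rw [← ENNReal.ofReal_add (by linarith [hδ.2]) (le_of_lt hδ.1)]
      norm_num
    have hch : ENNReal.ofReal (1-δ) + ENNReal.ofReal δ ≤ μ Bᶜ + ENNReal.ofReal δ := by
      rw [hsum]
      calc (1:ℝ≥0∞) ≤ μ B + μ Bᶜ := h1
        _ ≤ ENNReal.ofReal δ + μ Bᶜ := add_le_add_left hB _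
        _ = μ Bᶜ + ENNReal.ofReal δ := add_comm _ _
    exact (ENNReal.add_le_add_iff_right ENNReal.ofReal_ne_top).mp hch
  exact le_trans h2 (measure_mono hgood)
end

section
/- Let X_1,…,X_S be i.i.d. real-valued random variables with common law P, let p ∈ (0,1), and let X^{(1)} ≤ … ≤ X^{(S)} be the order statistics. Suppose s ∈ {1,…,S} and δ ∈ (0,1) satisfy Σ_{j=s}^{S} C(S,j) (1−p)^{j} p^{S−j} ≤ δ and S − s + 1 < s. Then, with probability at least 1 − 2δ over the sample, both P({ x : x ≤ X^{(s)} }) ≥ 1 − p and P({ x : x ≥ X^{(S−s+1)} }) ≥ 1 − p hold simultaneously, and consequently P({ x : X^{(S−s+1)} ≤ x ≤ X^{(s)} }) ≥ 1 − 2p. -/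
open MeasureTheory

open Classical in
/-- Number of coordinates of `X` falling in `E`. -/
noncomputable def countIn {S : ℕ} (X : Fin S → ℝ) (E : Set ℝ) : ℕ :=
  (Finset.univ.filter (fun i => X i ∈ E)).card

lemma countIn_mono {S : ℕ} (X : Fin S → ℝ) {E F : Set ℝ} (h : E ⊆ F) :
    countIn X E ≤ countIn X F := by
  classical
  exact Finset.card_le_card (Finset.monotone_filter_right _ (fun i _ hi => h hi))

lemma measure_pattern (P : Measure ℝ) [IsProbabilityMeasure P] {E : Set ℝ}
    (hE : MeasurableSet E) (S s : ℕ) :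
    (Measure.pi fun _ : Fin S => P) {X | s ≤ countIn X E}
      = ∑ j ∈ Finset.Icc s S, (S.choose j : ENNReal) * (P E) ^ j * (P Eᶜ) ^ (S - j) := by
  classical
  set μ := (Measure.pi fun _ : Fin S => P) with hμ
  set A : Finset (Fin S) → Set (Fin S → ℝ) :=
    fun T => Set.pi Set.univ (fun i => if i ∈ T then E else Eᶜ) with hA
  have hAm : ∀ T, MeasurableSet (A T) := by
    intro T
    exact MeasurableSet.univ_pi fun i => by by_cases h : i ∈ T <;> simp [h, hE, hE.compl]
  set 𝒯 : Finset (Finset (Fin S)) :=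
    Finset.univ.powerset.filter (fun T => s ≤ T.card) with h𝒯
  have hTX : ∀ (X : Fin S → ℝ) (T : Finset (Fin S)), X ∈ A T →
      Finset.univ.filter (fun i => X i ∈ E) = T := by
    intro X T hX
    ext i
    have := hX i (Set.mem_univ i)
    by_cases h : i ∈ T <;> simp [h] at this ⊢ <;> simpa using this
  have hev : {X : Fin S → ℝ | s ≤ countIn X E} = ⋃ T ∈ 𝒯, A T := by
    ext X
    simp only [Set.mem_setOf_eq, Set.mem_iUnion, exists_prop]
    constructor
    · intro hs
      refine ⟨Finset.univ.filter (fun i => X i ∈ E), ?_, ?_⟩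
      · simp only [h𝒯, Finset.mem_filter, Finset.mem_powerset]
        exact ⟨Finset.subset_univ _, by simpa [countIn] using hs⟩
      · intro i _
        by_cases h : X i ∈ E <;> simp [h]
    · rintro ⟨T, hT, hX⟩
      have := hTX X T hX
      simp only [h𝒯, Finset.mem_filter, Finset.mem_powerset] at hT
      simpa [countIn, this] using hT.2
  have hdisj : (↑𝒯 : Set (Finset (Fin S))).PairwiseDisjoint A := by
    intro T1 _ T2 _ hne
    refine Set.disjoint_left.2 fun X h1 h2 => ?_
    exact hne ((hTX X T1 h1).symm.trans (hTX X T2 h2))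
  have hAT : ∀ T : Finset (Fin S), μ (A T) = (P E) ^ T.card * (P Eᶜ) ^ (S - T.card) := by
    intro T
    rw [hμ, hA]
    rw [Measure.pi_pi]
    rw [← Finset.prod_mul_prod_compl T]
    have h1 : ∏ i ∈ T, P (if i ∈ T then E else Eᶜ) = (P E) ^ T.card := by
      rw [Finset.prod_congr rfl (fun i hi => by rw [if_pos hi]), Finset.prod_const]
    have h2 : ∏ i ∈ Tᶜ, P (if i ∈ T then E else Eᶜ) = (P Eᶜ) ^ (S - T.card) := by
      rw [Finset.prod_congr rfl (fun i hi => by rw [if_neg (Finset.mem_compl.1 hi)]),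
        Finset.prod_const, Finset.card_compl, Fintype.card_fin]
    rw [h1, h2]
  rw [hev, measure_biUnion_finset hdisj (fun T _ => hAm T)]
  simp only [hAT]
  have hmaps : ∀ T ∈ 𝒯, T.card ∈ Finset.Icc s S := by
    intro T hT
    simp only [h𝒯, Finset.mem_filter, Finset.mem_powerset] at hT
    exact Finset.mem_Icc.2 ⟨hT.2, le_trans (Finset.card_le_card hT.1) (by simp)⟩
  rw [← Finset.sum_fiberwise_of_maps_to' hmaps
    (fun j => (P E) ^ j * (P Eᶜ) ^ (S - j))]
  refine Finset.sum_congr rfl fun j hj => ?_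
  have hfil : 𝒯.filter (fun T => T.card = j) = Finset.powersetCard j Finset.univ := by
    ext T
    simp only [h𝒯, Finset.mem_filter, Finset.mem_powerset, Finset.mem_powersetCard]
    constructor
    · rintro ⟨⟨h1, _⟩, h3⟩; exact ⟨h1, h3⟩
    · rintro ⟨h1, h2⟩
      exact ⟨⟨h1, h2 ▸ (Finset.mem_Icc.1 hj).1⟩, h2⟩
  rw [hfil, Finset.sum_const, Finset.card_powersetCard, Finset.card_univ, Fintype.card_fin,
    nsmul_eq_mul, mul_assoc]

lemma tail_mono (S s : ℕ) {a b : ENNReal} (hab : a ≤ b) (hb : b ≤ 1) :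
    ∑ j ∈ Finset.Icc s S, (S.choose j : ENNReal) * a ^ j * (1 - a) ^ (S - j)
      ≤ ∑ j ∈ Finset.Icc s S, (S.choose j : ENNReal) * b ^ j * (1 - b) ^ (S - j) := by
  set ν := volume.restrict (Set.Icc (0:ℝ) 1) with hν
  haveI : IsProbabilityMeasure ν := ⟨by
    rw [hν, Measure.restrict_apply_univ]; simp [Real.volume_Icc]⟩
  have hbt : b ≠ ⊤ := ne_top_of_le_ne_top ENNReal.one_ne_top hb
  have hat : a ≠ ⊤ := ne_top_of_le_ne_top hbt hab
  have hb1 : b.toReal ≤ 1 := by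
    rw [← ENNReal.toReal_one]
    exact ENNReal.toReal_mono ENNReal.one_ne_top hb
  have hab' : a.toReal ≤ b.toReal := ENNReal.toReal_mono hbt hab
  have key : ∀ c : ENNReal, c ≠ ⊤ → c.toReal ≤ 1 → ν (Set.Ico 0 c.toReal) = c := by
    intro c hct hc1
    rw [hν, Measure.restrict_apply measurableSet_Ico,
      Set.inter_eq_left.2 (fun x hx => Set.mem_Icc.2
        ⟨(Set.mem_Ico.1 hx).1, le_trans (le_of_lt (Set.mem_Ico.1 hx).2) hc1⟩),
      Real.volume_Ico, sub_zero, ENNReal.ofReal_toReal hct]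
  have ha' := key a hat (le_trans hab' hb1)
  have hb' := key b hbt hb1
  have hac : ν ((Set.Ico 0 a.toReal)ᶜ) = 1 - a := by
    rw [prob_compl_eq_one_sub measurableSet_Ico, ha']
  have hbc : ν ((Set.Ico 0 b.toReal)ᶜ) = 1 - b := by
    rw [prob_compl_eq_one_sub measurableSet_Ico, hb']
  calc ∑ j ∈ Finset.Icc s S, (S.choose j : ENNReal) * a ^ j * (1 - a) ^ (S - j)
      = (Measure.pi fun _ : Fin S => ν) {X | s ≤ countIn X (Set.Ico 0 a.toReal)} := by
        rw [measure_pattern ν measurableSet_Ico S s, ha', hac]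
    _ ≤ (Measure.pi fun _ : Fin S => ν) {X | s ≤ countIn X (Set.Ico 0 b.toReal)} := by
        refine measure_mono fun X hX => ?_
        exact le_trans hX (countIn_mono X (Set.Ico_subset_Ico_right hab'))
    _ = _ := by rw [measure_pattern ν measurableSet_Ico S s, hb', hbc]

/-- Tail bound: if `P E ≤ 1 - p` then the probability that at least `s` of the `S`
i.i.d. samples land in `E` is at most `δ`. -/
lemma count_tail_bound (P : Measure ℝ) [IsProbabilityMeasure P] (S s : ℕ)
    {p δ : ℝ} (hp : p ∈ Set.Ioo (0 : ℝ) 1)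
    (hbinom : ∑ j ∈ Finset.Icc s S,
        (S.choose j : ℝ) * (1 - p) ^ j * p ^ (S - j) ≤ δ)
    {E : Set ℝ} (hE : MeasurableSet E) (hPE : P E ≤ ENNReal.ofReal (1 - p)) :
    (Measure.pi fun _ : Fin S => P) {X | s ≤ countIn X E} ≤ ENNReal.ofReal δ := by
  have hp0 : (0:ℝ) < 1 - p := by linarith [hp.2]
  have hc1 : ENNReal.ofReal (1 - p) ≤ 1 := by
    rw [← ENNReal.ofReal_one]
    exact ENNReal.ofReal_le_ofReal (by linarith [hp.1])
  have hcompl : P Eᶜ = 1 - P E := prob_compl_eq_one_sub hE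
  have honeminus : (1:ENNReal) - ENNReal.ofReal (1 - p) = ENNReal.ofReal p := by
    rw [← ENNReal.ofReal_one, ← ENNReal.ofReal_sub _ (le_of_lt hp0)]
    norm_num
  calc (Measure.pi fun _ : Fin S => P) {X | s ≤ countIn X E}
      = ∑ j ∈ Finset.Icc s S, (S.choose j : ENNReal) * (P E) ^ j * (1 - P E) ^ (S - j) := by
        rw [measure_pattern P hE S s, hcompl]
    _ ≤ ∑ j ∈ Finset.Icc s S, (S.choose j : ENNReal) * (ENNReal.ofReal (1 - p)) ^ j
          * (1 - ENNReal.ofReal (1 - p)) ^ (S - j) := tail_mono S s hPE hc1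
    _ = ENNReal.ofReal (∑ j ∈ Finset.Icc s S,
          (S.choose j : ℝ) * (1 - p) ^ j * p ^ (S - j)) := by
        rw [ENNReal.ofReal_sum_of_nonneg (fun j _ => mul_nonneg (mul_nonneg (Nat.cast_nonneg _)
          (pow_nonneg (le_of_lt hp0) _)) (pow_nonneg (le_of_lt hp.1) _))]
        refine Finset.sum_congr rfl fun j hj => ?_
        rw [honeminus, ENNReal.ofReal_mul (by positivity), ENNReal.ofReal_mul (by positivity),
          ENNReal.ofReal_pow (le_of_lt hp0), ENNReal.ofReal_pow (le_of_lt hp.1),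
          ENNReal.ofReal_natCast]
    _ ≤ ENNReal.ofReal δ := ENNReal.ofReal_le_ofReal hbinom

lemma orderStat_lt_count {S : ℕ} (X : Fin S → ℝ) {s : ℕ} (hs1 : 1 ≤ s) (hsS : s ≤ S)
    {q : ℝ} (h : orderStat X s < q) : s ≤ countIn X (Set.Iio q) := by
  classical
  have hlt : s - 1 < S := lt_of_lt_of_le (Nat.sub_lt hs1 one_pos) hsS
  rw [orderStat, dif_pos hlt] at h
  set σ := Tuple.sort X
  have hmono : Monotone (X ∘ σ) := Tuple.monotone_sort X
  have hsub : (Finset.Iic (⟨s - 1, hlt⟩ : Fin S)).map σ.toEmbedding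
      ⊆ Finset.univ.filter (fun i => X i ∈ Set.Iio q) := by
    intro i hi
    obtain ⟨j, hj, rfl⟩ := Finset.mem_map.1 hi
    refine Finset.mem_filter.2 ⟨Finset.mem_univ _, ?_⟩
    exact lt_of_le_of_lt (hmono (Finset.mem_Iic.1 hj)) h
  have := Finset.card_le_card hsub
  rwa [Finset.card_map, Fin.card_Iic, Nat.sub_add_cancel hs1] at this

lemma count_orderStat_gt {S : ℕ} (X : Fin S → ℝ) {k : ℕ} (hk1 : 1 ≤ k) (hkS : k ≤ S)
    {q : ℝ} (h : q < orderStat X k) : S - k + 1 ≤ countIn X (Set.Ioi q) := by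
  classical
  have hlt : k - 1 < S := lt_of_lt_of_le (Nat.sub_lt hk1 one_pos) hkS
  rw [orderStat, dif_pos hlt] at h
  set σ := Tuple.sort X
  have hmono : Monotone (X ∘ σ) := Tuple.monotone_sort X
  have hsub : (Finset.Ici (⟨k - 1, hlt⟩ : Fin S)).map σ.toEmbedding
      ⊆ Finset.univ.filter (fun i => X i ∈ Set.Ioi q) := by
    intro i hi
    obtain ⟨j, hj, rfl⟩ := Finset.mem_map.1 hi
    refine Finset.mem_filter.2 ⟨Finset.mem_univ _, ?_⟩
    exact lt_of_lt_of_le h (hmono (Finset.mem_Ici.1 hj))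
  have := Finset.card_le_card hsub
  rw [Finset.card_map, Fin.card_Ici] at this
  have h2 : S - (k - 1) ≤ countIn X (Set.Ioi q) := this
  omega

lemma exists_lower_quantile (P : Measure ℝ) [IsProbabilityMeasure P] {c : ENNReal}
    (hc0 : 0 < c) (hc1 : c < 1) :
    ∃ q : ℝ, c ≤ P (Set.Iic q) ∧ P (Set.Iio q) ≤ c := by
  have hne : ∃ x : ℝ, c ≤ P (Set.Iic x) := by
    have h1 : Filter.Tendsto (fun x : ℝ => P (Set.Iic x)) Filter.atTop (nhds (P Set.univ)) :=
      tendsto_measure_Iic_atTop P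
    rw [measure_univ] at h1
    obtain ⟨x, hx⟩ := (h1.eventually (eventually_gt_nhds hc1)).exists
    exact ⟨x, hx.le⟩
  have hbdd : ∃ x0 : ℝ, P (Set.Iic x0) < c := by
    have hempty : (⋂ n : ℕ, Set.Iic (-(n:ℝ))) = ∅ := by
      ext x
      simp only [Set.mem_iInter, Set.mem_Iic, Set.mem_empty_iff_false, iff_false, not_forall,
        not_le]
      obtain ⟨n, hn⟩ := exists_nat_gt (-x)
      exact ⟨n, by linarith⟩
    have h2 : Filter.Tendsto (fun n : ℕ => P (Set.Iic (-(n:ℝ)))) Filter.atTop (nhds 0) := by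
      have := tendsto_measure_iInter_atTop (μ := P) (s := fun n : ℕ => Set.Iic (-(n:ℝ)))
        (fun n => measurableSet_Iic.nullMeasurableSet)
        (fun m n hmn => Set.Iic_subset_Iic.2 (by exact_mod_cast neg_le_neg (Nat.cast_le.2 hmn)))
        ⟨0, measure_ne_top P _⟩
      rwa [hempty, measure_empty] at this
    obtain ⟨n, hn⟩ := (h2.eventually (eventually_lt_nhds hc0)).exists
    exact ⟨-(n:ℝ), hn⟩
  obtain ⟨x1, hx1⟩ := hne
  obtain ⟨x0, hx0⟩ := hbdd
  set A : Set ℝ := {x | c ≤ P (Set.Iic x)} with hA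
  have hAne : A.Nonempty := ⟨x1, hx1⟩
  have hAbdd : BddBelow A := by
    refine ⟨x0, fun a ha => ?_⟩
    by_contra hax
    push_neg at hax
    exact absurd (le_trans ha (measure_mono (Set.Iic_subset_Iic.2 hax.le))) (not_le.2 hx0)
  set q := sInf A with hq
  refine ⟨q, ?_, ?_⟩
  · have hseq : ∀ n : ℕ, c ≤ P (Set.Iic (q + 1/((n:ℝ)+1))) := by
      intro n
      have hlt : sInf A < q + 1/((n:ℝ)+1) := by
        rw [← hq]; have : (0:ℝ) < 1/((n:ℝ)+1) := by positivity
        linarith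
      obtain ⟨a, haA, halt⟩ := (csInf_lt_iff hAbdd hAne).1 hlt
      exact le_trans haA (measure_mono (Set.Iic_subset_Iic.2 halt.le))
    have hint : Set.Iic q = ⋂ n : ℕ, Set.Iic (q + 1/((n:ℝ)+1)) := by
      ext x
      simp only [Set.mem_Iic, Set.mem_iInter]
      constructor
      · intro h n
        have : (0:ℝ) < 1/((n:ℝ)+1) := by positivity
        linarith
      · intro h
        by_contra hx
        push_neg at hx
        obtain ⟨n, hn⟩ := exists_nat_one_div_lt (sub_pos.2 hx)
        have := h n
        linarith
    have htend : Filter.Tendsto (fun n : ℕ => P (Set.Iic (q + 1/((n:ℝ)+1)))) Filter.atTop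
        (nhds (P (Set.Iic q))) := by
      rw [hint]
      refine tendsto_measure_iInter_atTop (fun n => measurableSet_Iic.nullMeasurableSet)
        (fun m n hmn => Set.Iic_subset_Iic.2 ?_) ⟨0, measure_ne_top P _⟩
      have h1n : (0:ℝ) < (m:ℝ)+1 := by positivity
      have h2n : 1/((n:ℝ)+1) ≤ 1/((m:ℝ)+1) :=
        one_div_le_one_div_of_le h1n (by exact_mod_cast Nat.add_le_add_right hmn 1)
      linarith
    exact ge_of_tendsto' htend hseq
  · have hseq : ∀ n : ℕ, P (Set.Iic (q - 1/((n:ℝ)+1))) ≤ c := by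
      intro n
      by_contra hgt
      push_neg at hgt
      have hmem : q - 1/((n:ℝ)+1) ∈ A := hgt.le
      have := csInf_le hAbdd hmem
      rw [← hq] at this
      have hpos : (0:ℝ) < 1/((n:ℝ)+1) := by positivity
      linarith
    have hun : Set.Iio q = ⋃ n : ℕ, Set.Iic (q - 1/((n:ℝ)+1)) := by
      ext x
      simp only [Set.mem_Iio, Set.mem_iUnion, Set.mem_Iic]
      constructor
      · intro h
        obtain ⟨n, hn⟩ := exists_nat_one_div_lt (sub_pos.2 h)
        exact ⟨n, by linarith⟩
      · rintro ⟨n, hn⟩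
        have hpos : (0:ℝ) < 1/((n:ℝ)+1) := by positivity
        linarith
    have htend : Filter.Tendsto (fun n : ℕ => P (Set.Iic (q - 1/((n:ℝ)+1)))) Filter.atTop
        (nhds (P (Set.Iio q))) := by
      rw [hun]
      refine tendsto_measure_iUnion_atTop (fun m n hmn => Set.Iic_subset_Iic.2 ?_)
      have h1n : (0:ℝ) < (m:ℝ)+1 := by positivity
      have h2n : 1/((n:ℝ)+1) ≤ 1/((m:ℝ)+1) :=
        one_div_le_one_div_of_le h1n (by exact_mod_cast Nat.add_le_add_right hmn 1)
      linarith
    exact le_of_tendsto' htend hseq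

lemma exists_upper_quantile (P : Measure ℝ) [IsProbabilityMeasure P] {c : ENNReal}
    (hc0 : 0 < c) (hc1 : c < 1) :
    ∃ q : ℝ, c ≤ P (Set.Ici q) ∧ P (Set.Ioi q) ≤ c := by
  have hm : Measurable (fun x : ℝ => -x) := measurable_neg
  set P' := P.map (fun x : ℝ => -x) with hP'
  haveI : IsProbabilityMeasure P' := Measure.isProbabilityMeasure_map hm.aemeasurable
  obtain ⟨q, hq1, hq2⟩ := exists_lower_quantile P' hc0 hc1
  have e1 : P' (Set.Iic q) = P (Set.Ici (-q)) := by
    rw [hP', Measure.map_apply hm measurableSet_Iic]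
    congr 1
    ext x
    simp only [Set.mem_preimage, Set.mem_Iic, Set.mem_Ici]
    constructor <;> intro h <;> linarith
  have e2 : P' (Set.Iio q) = P (Set.Ioi (-q)) := by
    rw [hP', Measure.map_apply hm measurableSet_Iio]
    congr 1
    ext x
    simp only [Set.mem_preimage, Set.mem_Iio, Set.mem_Ioi]
    constructor <;> intro h <;> linarith
  exact ⟨-q, by rwa [e1] at hq1, by rwa [e2] at hq2⟩

/-- **Two-sided order-statistic quantile coverage.**
Let `X_1,…,X_S` be i.i.d. with law `P`, `p ∈ (0,1)`, and suppose `s ∈ {1,…,S}`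
and `δ ∈ (0,1)` satisfy `∑_{j=s}^{S} C(S,j) (1-p)^j p^{S-j} ≤ δ` and
`S - s + 1 < s`.  Then, with probability at least `1 - 2δ` over the sample
(w.r.t. `P^⊗S`), both `P({x : x ≤ X^{(s)}}) ≥ 1 - p` and
`P({x : X^{(S-s+1)} ≤ x}) ≥ 1 - p` hold simultaneously, and consequently
`P({x : X^{(S-s+1)} ≤ x ≤ X^{(s)}}) ≥ 1 - 2p`. -/
theorem orderStat_two_sided_quantile_coverage
    (S : ℕ) (hS : 0 < S) (P : Measure ℝ) [IsProbabilityMeasure P]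
    (p δ : ℝ) (hp : p ∈ Set.Ioo (0 : ℝ) 1) (hδ : δ ∈ Set.Ioo (0 : ℝ) 1)
    (s : ℕ) (hs1 : 1 ≤ s) (hsS : s ≤ S)
    (hbinom : ∑ j ∈ Finset.Icc s S,
        (S.choose j : ℝ) * (1 - p) ^ j * p ^ (S - j) ≤ δ)
    (hs2 : S - s + 1 < s) :
    ENNReal.ofReal (1 - 2 * δ) ≤
      (Measure.pi fun _ : Fin S => P)
        {X : Fin S → ℝ |
          ENNReal.ofReal (1 - p) ≤ P {x : ℝ | x ≤ orderStat X s} ∧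
          ENNReal.ofReal (1 - p) ≤ P {x : ℝ | orderStat X (S - s + 1) ≤ x} ∧
          ENNReal.ofReal (1 - 2 * p) ≤
            P {x : ℝ | orderStat X (S - s + 1) ≤ x ∧ x ≤ orderStat X s}} := by
  set μ := (Measure.pi fun _ : Fin S => P) with hμ
  set c := ENNReal.ofReal (1 - p) with hc
  have hc0 : 0 < c := ENNReal.ofReal_pos.2 (by linarith [hp.2])
  have hc1 : c < 1 := by
    rw [hc, ← ENNReal.ofReal_one]
    exact ENNReal.ofReal_lt_ofReal_iff one_pos |>.2 (by linarith [hp.1])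
  obtain ⟨q, hq1, hq2⟩ := exists_lower_quantile P hc0 hc1
  obtain ⟨q', hq'1, hq'2⟩ := exists_upper_quantile P hc0 hc1
  set k := S - s + 1 with hk
  have hk1 : 1 ≤ k := by omega
  have hkS : k ≤ S := by omega
  have hkk : S - k + 1 = s := by omega
  have hcount1 : μ {X | s ≤ countIn X (Set.Iio q)} ≤ ENNReal.ofReal δ :=
    count_tail_bound P S s hp hbinom measurableSet_Iio hq2
  have hcount2 : μ {X | s ≤ countIn X (Set.Ioi q')} ≤ ENNReal.ofReal δ :=
    count_tail_bound P S s hp hbinom measurableSet_Ioi hq'2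
  set Tset : Set (Fin S → ℝ) :=
    {X : Fin S → ℝ |
      ENNReal.ofReal (1 - p) ≤ P {x : ℝ | x ≤ orderStat X s} ∧
      ENNReal.ofReal (1 - p) ≤ P {x : ℝ | orderStat X (S - s + 1) ≤ x} ∧
      ENNReal.ofReal (1 - 2 * p) ≤
        P {x : ℝ | orderStat X (S - s + 1) ≤ x ∧ x ≤ orderStat X s}} with hT
  have hsub : Tsetᶜ ⊆ {X | s ≤ countIn X (Set.Iio q)} ∪ {X | s ≤ countIn X (Set.Ioi q')} := by
    intro X hX
    by_contra hcon
    simp only [Set.mem_union, Set.mem_setOf_eq, not_or, not_le] at hcon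
    apply hX
    have hA : q ≤ orderStat X s := by
      by_contra h
      push_neg at h
      exact absurd (orderStat_lt_count X hs1 hsS h) (not_le.2 hcon.1)
    have hB : orderStat X k ≤ q' := by
      by_contra h
      push_neg at h
      have := count_orderStat_gt X hk1 hkS h
      rw [hkk] at this
      exact absurd this (not_le.2 hcon.2)
    have hiic : {x : ℝ | x ≤ orderStat X s} = Set.Iic (orderStat X s) := rfl
    have hici : {x : ℝ | orderStat X (S - s + 1) ≤ x} = Set.Ici (orderStat X k) := rfl
    have first : c ≤ P {x : ℝ | x ≤ orderStat X s} := by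
      rw [hiic]
      exact le_trans hq1 (measure_mono (Set.Iic_subset_Iic.2 hA))
    have second : c ≤ P {x : ℝ | orderStat X (S - s + 1) ≤ x} := by
      rw [hici]
      exact le_trans hq'1 (measure_mono (Set.Ici_subset_Ici.2 hB))
    refine ⟨first, second, ?_⟩
    by_cases hp2 : 1 - 2 * p ≤ 0
    · rw [ENNReal.ofReal_eq_zero.2 hp2]
      exact zero_le
    push_neg at hp2
    set a := orderStat X k
    set b := orderStat X s
    have hset : {x : ℝ | orderStat X (S - s + 1) ≤ x ∧ x ≤ orderStat X s}
        = Set.Ici a ∩ Set.Iic b := by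
      ext x
      simp [Set.mem_Ici, Set.mem_Iic, a, b, ← hk]
    rw [hset]
    have key := measure_union_add_inter (μ := P) (t := Set.Iic b) (Set.Ici a) measurableSet_Iic
    have hsum : c + c ≤ P (Set.Ici a ∪ Set.Iic b) + P (Set.Ici a ∩ Set.Iic b) := by
      rw [key]
      exact add_le_add (by rw [hici] at second; exact second) (by rw [hiic] at first; exact first)
    have hle1 : P (Set.Ici a ∪ Set.Iic b) ≤ 1 := prob_le_one
    have hcc : c + c = 1 + ENNReal.ofReal (1 - 2 * p) := by
      rw [hc, ← ENNReal.ofReal_add (by linarith [hp.2]) (by linarith [hp.2]),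
        ← ENNReal.ofReal_one, ← ENNReal.ofReal_add (by norm_num) (le_of_lt hp2)]
      norm_num
      ring_nf
    have : 1 + ENNReal.ofReal (1 - 2 * p) ≤ 1 + P (Set.Ici a ∩ Set.Iic b) := by
      rw [← hcc]
      exact le_trans hsum (add_le_add_left hle1 _)
    exact (ENNReal.add_le_add_iff_left ENNReal.one_ne_top).1 this
  have hTc : μ Tsetᶜ ≤ ENNReal.ofReal (2 * δ) := by
    refine le_trans (measure_mono hsub) (le_trans (measure_union_le _ _) ?_)
    rw [show (2:ℝ) * δ = δ + δ by ring, ENNReal.ofReal_add hδ.1.le hδ.1.le]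
    exact add_le_add hcount1 hcount2
  have huniv : (1:ENNReal) ≤ μ Tset + μ Tsetᶜ := by
    have := measure_union_le (μ := μ) Tset Tsetᶜ
    rwa [Set.union_compl_self, measure_univ] at this
  have hfinal : ENNReal.ofReal (1 - 2 * δ) = 1 - ENNReal.ofReal (2 * δ) := by
    rw [ENNReal.ofReal_sub _ (by linarith [hδ.1]), ENNReal.ofReal_one]
  rw [hfinal]
  rw [tsub_le_iff_right]
  exact le_trans huniv (add_le_add_right hTc _)
end
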